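/- Let λ > 0 and h ∈ E_λ. The function f̃_h(x) = ((x−1)!/λ^x)·Σ_{i=x}^∞ (λ^i/i!)·h(i) satisfies the modified Stein equation x·f̃_h(x) − λ·f̃_h(x+1) = h(x) for all x ∈ ℕ_*. -/

import Mathlib

/-- `h ∈ E_λ` : for every polynomial `P`, `Σ_{i ≥ 1} (λ^i/i!)·|h(i)·P(i)| < ∞`
(the sum over `i ≥ 1` is written with the shifted index `i = j + 1`). -/
def memE (lam : ℝ) (h : ℕ → ℝ) : Prop :=
  ∀ P : Polynomial ℝ,
    Summable fun j : ℕ =>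
      lam ^ (j + 1) / ((j + 1).factorial : ℝ) * |h (j + 1) * P.eval ((j : ℝ) + 1)|

/-- `f̃_h(x) = ((x−1)!/λ^x)·Σ_{i=x}^∞ (λ^i/i!)·h(i)` (shifted index `i = x + j`). -/
noncomputable def ftilde (lam : ℝ) (h : ℕ → ℝ) (x : ℕ) : ℝ :=
  ((x - 1).factorial : ℝ) / lam ^ x * ∑' j : ℕ, lam ^ (x + j) * h (x + j) / ((x + j).factorial : ℝ)

lemma summable_a (lam : ℝ) (hlam : 0 < lam) (h : ℕ → ℝ) (hh : memE lam h) :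
    Summable fun n : ℕ => lam ^ (n + 1) * h (n + 1) / ((n + 1).factorial : ℝ) := by
  have h1 := hh 1
  simp only [Polynomial.eval_one, mul_one] at h1
  refine Summable.of_abs (h1.congr fun j => ?_)
  rw [abs_div, abs_mul, abs_of_pos (pow_pos hlam _),
    abs_of_pos (by exact_mod_cast Nat.factorial_pos _ : (0:ℝ) < ((j+1).factorial : ℝ))]
  ring

theorem ftilde_solves_modified_stein (lam : ℝ) (hlam : 0 < lam) (h : ℕ → ℝ)
    (hh : memE lam h) :
    ∀ x : ℕ, 1 ≤ x → (x : ℝ) * ftilde lam h x - lam * ftilde lam h (x + 1) = h x := by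
  intro x hx
  set a : ℕ → ℝ := fun n => lam ^ n * h n / (n.factorial : ℝ) with ha
  have hsum : Summable fun n : ℕ => a (n + 1) := summable_a lam hlam h hh
  -- summability of tails
  have htail : ∀ k : ℕ, Summable fun j : ℕ => a (k + 1 + j) := by
    intro k
    have := (summable_nat_add_iff k).2 hsum
    exact this.congr fun j => by simp [add_comm, add_assoc, add_left_comm]
  obtain ⟨y, rfl⟩ := Nat.exists_eq_add_of_le hx
  -- x = 1 + y
  have hsumx : Summable fun j : ℕ => a (1 + y + j) :=
    (htail y).congr fun j => by ring_nf
  have hS : (∑' j : ℕ, a (1 + y + j)) = a (1 + y) + ∑' j : ℕ, a (1 + y + 1 + j) := by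
    rw [Summable.tsum_eq_zero_add hsumx]
    congr 1
    exact tsum_congr fun j => by ring_nf
  have hfe : ∀ k : ℕ, ftilde lam h k = ((k - 1).factorial : ℝ) / lam ^ k * ∑' j : ℕ, a (k + j) := by
    intro k
    unfold ftilde
    congr 1
  rw [hfe, hfe, hS]
  have hlne : lam ≠ 0 := ne_of_gt hlam
  have hfac : ∀ n : ℕ, ((n.factorial : ℝ)) ≠ 0 := fun n => by
    exact_mod_cast (Nat.factorial_pos n).ne'
  -- simplify factorials
  have h1 : (1 + y - 1) = y := by omega
  have h2 : (1 + y + 1 - 1) = 1 + y := by omega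
  rw [h1, h2]
  have hxfac : ((1 + y : ℕ) : ℝ) * (y.factorial : ℝ) = ((1 + y).factorial : ℝ) := by
    rw [add_comm 1 y]
    exact_mod_cast (Nat.factorial_succ y).symm
  -- key algebra
  have key : ((1 + y : ℕ) : ℝ) * ((y.factorial : ℝ) / lam ^ (1 + y)) =
      lam * (((1 + y).factorial : ℝ) / lam ^ (1 + y + 1)) := by
    field_simp
    rw [← hxfac]
    push_cast
    ring
  have hT : (∑' j : ℕ, a (1 + y + 1 + j)) = ∑' j : ℕ, a (1 + y + 1 + j) := rfl
  -- now compute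
  have expand : ((1 + y : ℕ) : ℝ) * ((y.factorial : ℝ) / lam ^ (1 + y) *
      (a (1 + y) + ∑' j : ℕ, a (1 + y + 1 + j))) -
      lam * (((1 + y).factorial : ℝ) / lam ^ (1 + y + 1) * ∑' j : ℕ, a (1 + y + 1 + j)) =
      ((1 + y : ℕ) : ℝ) * ((y.factorial : ℝ) / lam ^ (1 + y)) * a (1 + y) := by
    linear_combination (∑' j : ℕ, a (1 + y + 1 + j)) * key
  rw [expand]
  show ((1 + y : ℕ) : ℝ) * ((y.factorial : ℝ) / lam ^ (1 + y)) *
      (lam ^ (1 + y) * h (1 + y) / (((1 + y).factorial : ℝ))) = h (1 + y)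
  rw [← hxfac]
  field_simp
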